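/- For any real ρ ≥ 1, the series ∑_{m=0}^∞ √(m+2)·(log(m+2))^{3/2}·ρ^m/m! converges and is at most C·e^{ρ}·√ρ·(log(ρ+2))^{3/2} for some absolute constant C. -/

import Mathlib

open Real

lemma aux_cube' : ∀ n : ℕ, ((n:ℝ)+4)^3 ≤ 256 * 2^n := by
  intro n
  induction n with
  | zero => norm_num
  | succ k ih =>
    have h : (0:ℝ) ≤ (k:ℝ) := Nat.cast_nonneg k
    have h2 : ((k:ℝ)+1+4)^3 ≤ 2*((k:ℝ)+4)^3 := by
      nlinarith [mul_nonneg h (sq_nonneg (k:ℝ)), sq_nonneg (k:ℝ)]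
    push_cast
    calc ((k:ℝ)+1+4)^3 ≤ 2*((k:ℝ)+4)^3 := h2
      _ ≤ 2*(256*2^k) := by linarith
      _ = 256*2^(k+1) := by ring

lemma cube_le' : ∀ m : ℕ, ((m:ℝ)+2)^3 ≤ 64 * 2^m
  | 0 => by norm_num
  | 1 => by norm_num
  | (n+2) => by
      have h := aux_cube' n
      push_cast
      calc ((n:ℝ)+2+2)^3 = ((n:ℝ)+4)^3 := by ring
        _ ≤ 256*2^n := h
        _ = 64*2^(n+2) := by ring

lemma summable_q (ρ : ℝ) (hρ : 1 ≤ ρ) :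
    Summable (fun m : ℕ => ((m:ℝ)+2)^3 * ρ^m / (Nat.factorial m : ℝ)) := by
  have hρ0 : (0:ℝ) < ρ := by linarith
  refine Summable.of_nonneg_of_le (fun m => by positivity) (fun m => ?_)
    ((Real.summable_pow_div_factorial (2*ρ)).mul_left 64)
  have h := cube_le' m
  have hF : (0:ℝ) < (Nat.factorial m : ℝ) := by exact_mod_cast (Nat.factorial_pos m)
  rw [div_le_iff₀ hF]
  have heq : (64:ℝ) * ((2*ρ)^m / (Nat.factorial m : ℝ)) * (Nat.factorial m : ℝ)
      = 64 * 2^m * ρ^m := by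
    field_simp; ring
  rw [heq]
  have hp : (0:ℝ) ≤ ρ^m := by positivity
  nlinarith [mul_le_mul_of_nonneg_right h hp]

lemma tsum_q_le (ρ : ℝ) (hρ : 1 ≤ ρ) :
    (∑' m : ℕ, ((m:ℝ)+2)^3 * ρ^m / (Nat.factorial m : ℝ)) ≤ 88 * ρ^3 * Real.exp ρ := by
  have hρ0 : (0:ℝ) < ρ := by linarith
  have hq := summable_q ρ hρ
  set q : ℕ → ℝ := fun m => ((m:ℝ)+2)^3 * ρ^m / (Nat.factorial m : ℝ) with hqdef
  have hsplit := Summable.sum_add_tsum_nat_add (f := q) 3 hq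
  have hexp : Real.exp ρ = ∑' n : ℕ, ρ ^ n / (Nat.factorial n : ℝ) := by
    rw [Real.exp_eq_exp_ℝ, NormedSpace.exp_eq_tsum_div]
  have hexp1 : 1 ≤ Real.exp ρ := by
    have := Real.exp_pos ρ; nlinarith [Real.add_one_le_exp ρ]
  -- shifted bound
  have hshift : ∀ i : ℕ, q (i+3) ≤ 21 * ρ^3 * (ρ^i / (Nat.factorial i : ℝ)) := by
    intro i
    have hF : (0:ℝ) < (Nat.factorial i : ℝ) := by exact_mod_cast (Nat.factorial_pos i)
    have hfac : ((Nat.factorial (i+3) : ℕ) : ℝ)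
        = ((i:ℝ)+3)*(((i:ℝ)+2)*(((i:ℝ)+1)*(Nat.factorial i : ℝ))) := by
      simp [Nat.factorial_succ]
      push_cast
      ring
    have h1 : ((i:ℝ)+5)^3 ≤ 21*(((i:ℝ)+1)*(((i:ℝ)+2)*((i:ℝ)+3))) := by
      have h : (0:ℝ) ≤ (i:ℝ) := Nat.cast_nonneg i
      nlinarith [mul_nonneg h (sq_nonneg (i:ℝ)), sq_nonneg (i:ℝ)]
    have hxq : q (i+3) = ((i:ℝ)+5)^3 * ρ^(i+3) / ((Nat.factorial (i+3) : ℕ) : ℝ) := by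
      simp only [hqdef]
      push_cast
      ring_nf
    rw [hxq, hfac, div_le_iff₀ (by positivity)]
    have heq : (21:ℝ) * ρ^3 * (ρ^i / (Nat.factorial i : ℝ))
          * (((i:ℝ)+3)*(((i:ℝ)+2)*(((i:ℝ)+1)*(Nat.factorial i : ℝ))))
        = 21*(((i:ℝ)+1)*(((i:ℝ)+2)*((i:ℝ)+3))) * (ρ^3*ρ^i) := by
      field_simp
    rw [heq, pow_add]
    have hp : (0:ℝ) ≤ ρ^3*ρ^i := by positivity
    nlinarith [mul_le_mul_of_nonneg_right h1 hp]
  have hsum3 : (∑' i : ℕ, q (i+3)) ≤ 21 * ρ^3 * Real.exp ρ := by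
    have hs1 : Summable (fun i : ℕ => q (i+3)) := (summable_nat_add_iff 3).2 hq
    have hs2 : Summable (fun i : ℕ => 21 * ρ^3 * (ρ^i / (Nat.factorial i : ℝ))) :=
      (Real.summable_pow_div_factorial ρ).mul_left _
    calc (∑' i : ℕ, q (i+3)) ≤ ∑' i : ℕ, 21 * ρ^3 * (ρ^i / (Nat.factorial i : ℝ)) :=
          Summable.tsum_le_tsum hshift hs1 hs2
      _ = 21 * ρ^3 * ∑' i : ℕ, ρ^i / (Nat.factorial i : ℝ) := tsum_mul_left
      _ = 21 * ρ^3 * Real.exp ρ := by rw [← hexp]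
  have hrange : (∑ i ∈ Finset.range 3, q i) ≤ 67 * ρ^3 := by
    have : (∑ i ∈ Finset.range 3, q i) = 8 + 27*ρ + 32*ρ^2 := by
      simp [hqdef, Finset.sum_range_succ, Nat.factorial]
      ring
    rw [this]
    nlinarith
  have h67 : (67:ℝ) * ρ^3 ≤ 67 * ρ^3 * Real.exp ρ := by
    nlinarith [mul_nonneg (pow_nonneg hρ0.le 3) (sub_nonneg.2 hexp1)]
  linarith [hsplit.symm.le.trans (by linarith : (∑ i ∈ Finset.range 3, q i) + (∑' i : ℕ, q (i+3)) ≤ 88 * ρ^3 * Real.exp ρ)]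
lemma log_rho_ge (ρ : ℝ) (hρ : 1 ≤ ρ) : 1 ≤ Real.log (ρ+2) := by
  have h3 : (1:ℝ) ≤ Real.log 3 := by
    rw [Real.le_log_iff_exp_le (by norm_num)]
    exact (Real.exp_one_lt_d9).le.trans (by norm_num)
  exact h3.trans (Real.log_le_log (by norm_num) (by linarith))

lemma pointwise (ρ : ℝ) (hρ : 1 ≤ ρ) (m : ℕ) :
    Real.sqrt ((m:ℝ)+2) * (Real.log ((m:ℝ)+2))^((3:ℝ)/2)
      ≤ 8 * (1 + ((m:ℝ)+2)^3/ρ^3) * (Real.sqrt ρ * (Real.log (ρ+2))^((3:ℝ)/2)) := by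
  set x : ℝ := (m:ℝ)+2 with hxdef
  have hx2 : (2:ℝ) ≤ x := by
    have : (0:ℝ) ≤ (m:ℝ) := Nat.cast_nonneg m
    simp only [hxdef]; linarith
  have hx0 : (0:ℝ) < x := by linarith
  have hρ0 : (0:ℝ) < ρ := by linarith
  set L : ℝ := Real.log (ρ+2) with hLdef
  have hL1 : 1 ≤ L := log_rho_ge ρ hρ
  have hL0 : 0 ≤ L := by linarith
  have hL32 : (1:ℝ) ≤ L ^ ((3:ℝ)/2) := Real.one_le_rpow hL1 (by norm_num)
  have hsρ1 : (1:ℝ) ≤ Real.sqrt ρ := by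
    rw [show (1:ℝ) = Real.sqrt 1 by simp]
    exact Real.sqrt_le_sqrt hρ
  have hsρ0 : (0:ℝ) ≤ Real.sqrt ρ := Real.sqrt_nonneg ρ
  have hsum0 : (0:ℝ) ≤ x^3/ρ^3 := by positivity
  have hsqρ2 : Real.sqrt (ρ+2) ≤ 2 * Real.sqrt ρ := by
    have : Real.sqrt (ρ+2) ≤ Real.sqrt (4*ρ) := Real.sqrt_le_sqrt (by linarith)
    calc Real.sqrt (ρ+2) ≤ Real.sqrt (4*ρ) := this
      _ = Real.sqrt 4 * Real.sqrt ρ := Real.sqrt_mul (by norm_num) ρ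
      _ = 2 * Real.sqrt ρ := by rw [show (4:ℝ) = 2^2 by norm_num, Real.sqrt_sq (by norm_num)]
  have hlogx0 : 0 ≤ Real.log x := Real.log_nonneg (by linarith)
  rcases le_or_gt x (ρ+2) with hc | hc
  · -- easy case
    have h1 : Real.sqrt x ≤ 2 * Real.sqrt ρ := (Real.sqrt_le_sqrt hc).trans hsqρ2
    have h2 : (Real.log x)^((3:ℝ)/2) ≤ L^((3:ℝ)/2) :=
      Real.rpow_le_rpow hlogx0 (Real.log_le_log hx0 hc) (by norm_num)
    have h3 : Real.sqrt x * (Real.log x)^((3:ℝ)/2) ≤ (2*Real.sqrt ρ) * L^((3:ℝ)/2) :=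
      mul_le_mul h1 h2 (Real.rpow_nonneg hlogx0 _) (by positivity)
    nlinarith [mul_nonneg hsρ0 (le_trans (by norm_num : (0:ℝ) ≤ 1) hL32),
      mul_nonneg hsum0 (mul_nonneg hsρ0 (le_trans (by norm_num : (0:ℝ) ≤ 1) hL32))]
  · -- big case
    set lam : ℝ := x / (ρ+2) with hlam
    have hlam1 : 1 ≤ lam := (one_le_div (by linarith)).2 hc.le
    have hlam0 : 0 < lam := by linarith
    have hxeq : x = lam * (ρ+2) := by rw [hlam, div_mul_cancel₀ x (by linarith : ρ + 2 ≠ 0)]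
    have hlog : Real.log x ≤ 2 * lam * L := by
      have : Real.log x = Real.log lam + L := by
        rw [hxeq, Real.log_mul (by linarith) (by linarith)]
      have hll : Real.log lam ≤ lam := (Real.log_le_sub_one_of_pos hlam0).trans (by linarith)
      nlinarith
    have hrpow : (Real.log x)^((3:ℝ)/2) ≤ (2*lam)^((3:ℝ)/2) * L^((3:ℝ)/2) := by
      calc (Real.log x)^((3:ℝ)/2) ≤ (2*lam*L)^((3:ℝ)/2) :=
            Real.rpow_le_rpow hlogx0 hlog (by norm_num)
        _ = (2*lam)^((3:ℝ)/2) * L^((3:ℝ)/2) := Real.mul_rpow (by positivity) hL0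
    have h2lam : (2*lam)^((3:ℝ)/2) ≤ 4*lam^2 := by
      have h1 : (2*lam)^((3:ℝ)/2) ≤ (2*lam)^(((2:ℕ)):ℝ) :=
        Real.rpow_le_rpow_of_exponent_le (by linarith) (by norm_num)
      rw [Real.rpow_natCast] at h1
      nlinarith
    have hsqx : Real.sqrt x ≤ 2 * lam * Real.sqrt ρ := by
      rw [hxeq, Real.sqrt_mul hlam0.le]
      have hsl : Real.sqrt lam ≤ lam := by
        have h := Real.sqrt_le_sqrt (show lam ≤ lam^2 by nlinarith)
        rwa [Real.sqrt_sq hlam0.le] at h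
      calc Real.sqrt lam * Real.sqrt (ρ+2) ≤ lam * (2*Real.sqrt ρ) :=
            mul_le_mul hsl hsqρ2 (Real.sqrt_nonneg _) (by linarith)
        _ = 2 * lam * Real.sqrt ρ := by ring
    have hlam3 : lam^3 ≤ x^3/ρ^3 := by
      rw [hlam, div_pow]
      apply div_le_div_of_nonneg_left (by positivity) (by positivity)
      · apply pow_le_pow_left₀ hρ0.le (by linarith)
    have key : Real.sqrt x * (Real.log x)^((3:ℝ)/2)
        ≤ (2*lam*Real.sqrt ρ) * ((4*lam^2) * L^((3:ℝ)/2)) := by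
      apply mul_le_mul hsqx _ (Real.rpow_nonneg hlogx0 _) (by positivity)
      exact hrpow.trans (mul_le_mul_of_nonneg_right h2lam (Real.rpow_nonneg hL0 _))
    have : (2*lam*Real.sqrt ρ) * ((4*lam^2) * L^((3:ℝ)/2))
        = 8 * lam^3 * (Real.sqrt ρ * L^((3:ℝ)/2)) := by ring
    rw [this] at key
    refine key.trans ?_
    have hpos : 0 ≤ Real.sqrt ρ * L^((3:ℝ)/2) := by positivity
    nlinarith [mul_le_mul_of_nonneg_right hlam3 hpos]

/-- The polylog-weighted exponential series converges and is bounded by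
C·e^ρ·√ρ·(log(ρ+2))^{3/2}. -/
theorem weighted_exp_series_bound :
    ∃ C : ℝ, 0 < C ∧ ∀ ρ : ℝ, 1 ≤ ρ →
      Summable (fun m : ℕ =>
        Real.sqrt ((m : ℝ) + 2) * (Real.log ((m : ℝ) + 2)) ^ ((3 : ℝ) / 2) * ρ ^ m
          / (Nat.factorial m)) ∧
      (∑' m : ℕ,
        Real.sqrt ((m : ℝ) + 2) * (Real.log ((m : ℝ) + 2)) ^ ((3 : ℝ) / 2) * ρ ^ m
          / (Nat.factorial m))
        ≤ C * Real.exp ρ * Real.sqrt ρ * (Real.log (ρ + 2)) ^ ((3 : ℝ) / 2) := by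
  refine ⟨1000, by norm_num, fun ρ hρ => ?_⟩
  have hρ0 : (0:ℝ) < ρ := by linarith
  set L32 : ℝ := (Real.log (ρ + 2)) ^ ((3 : ℝ) / 2) with hL32def
  have hL320 : 0 ≤ L32 := Real.rpow_nonneg (Real.log_nonneg (by linarith)) _
  have hS0 : 0 ≤ Real.sqrt ρ * L32 := mul_nonneg (Real.sqrt_nonneg ρ) hL320
  -- pointwise domination by the cubic series
  have hle : ∀ m : ℕ,
      Real.sqrt ((m : ℝ) + 2) * (Real.log ((m : ℝ) + 2)) ^ ((3 : ℝ) / 2) * ρ ^ m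
        / (Nat.factorial m)
      ≤ ((m:ℝ)+2)^3 * ρ^m / (Nat.factorial m : ℝ) := by
    intro m
    have hx2 : (2:ℝ) ≤ (m:ℝ)+2 := by
      have : (0:ℝ) ≤ (m:ℝ) := Nat.cast_nonneg m; linarith
    have hlog0 : 0 ≤ Real.log ((m:ℝ)+2) := Real.log_nonneg (by linarith)
    have hf : Real.sqrt ((m : ℝ) + 2) * (Real.log ((m : ℝ) + 2)) ^ ((3 : ℝ) / 2)
        ≤ ((m:ℝ)+2)^3 := by
      have h1 : Real.sqrt ((m:ℝ)+2) ≤ (m:ℝ)+2 := by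
        have h := Real.sqrt_le_sqrt (show (m:ℝ)+2 ≤ ((m:ℝ)+2)^2 by nlinarith)
        rwa [Real.sqrt_sq (by linarith)] at h
      have h2 : (Real.log ((m:ℝ)+2)) ^ ((3 : ℝ) / 2) ≤ ((m:ℝ)+2) ^ ((3 : ℝ) / 2) :=
        Real.rpow_le_rpow hlog0 (Real.log_le_self (by linarith)) (by norm_num)
      have h3 : ((m:ℝ)+2) ^ ((3 : ℝ) / 2) ≤ ((m:ℝ)+2) ^ (((2:ℕ)):ℝ) :=
        Real.rpow_le_rpow_of_exponent_le (by linarith) (by norm_num)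
      rw [Real.rpow_natCast] at h3
      calc Real.sqrt ((m : ℝ) + 2) * (Real.log ((m : ℝ) + 2)) ^ ((3 : ℝ) / 2)
          ≤ ((m:ℝ)+2) * ((m:ℝ)+2)^2 :=
            mul_le_mul h1 (h2.trans h3) (Real.rpow_nonneg hlog0 _) (by linarith)
        _ = ((m:ℝ)+2)^3 := by ring
    have hF : (0:ℝ) < (Nat.factorial m : ℝ) := by exact_mod_cast (Nat.factorial_pos m)
    have hρm : (0:ℝ) ≤ ρ^m := by positivity
    gcongr
  have hq := summable_q ρ hρ
  have hsummable : Summable (fun m : ℕ =>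
      Real.sqrt ((m : ℝ) + 2) * (Real.log ((m : ℝ) + 2)) ^ ((3 : ℝ) / 2) * ρ ^ m
        / (Nat.factorial m)) :=
    Summable.of_nonneg_of_le (fun m => div_nonneg (mul_nonneg (mul_nonneg
      (Real.sqrt_nonneg _) (Real.rpow_nonneg (Real.log_nonneg (by
        have : (0:ℝ) ≤ (m:ℝ) := Nat.cast_nonneg m; linarith)) _))
      (pow_nonneg hρ0.le m)) (Nat.cast_nonneg _)) hle hq
  refine ⟨hsummable, ?_⟩
  -- dominating summable series
  set c1 : ℝ := 8 * (Real.sqrt ρ * L32) with hc1def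
  set c2 : ℝ := 8 * (Real.sqrt ρ * L32) / ρ^3 with hc2def
  have hc10 : 0 ≤ c1 := by positivity
  have hc20 : 0 ≤ c2 := by positivity
  have hs1 : Summable (fun m : ℕ => c1 * (ρ^m / (Nat.factorial m : ℝ))) :=
    (Real.summable_pow_div_factorial ρ).mul_left c1
  have hs2 : Summable (fun m : ℕ => c2 * (((m:ℝ)+2)^3 * ρ^m / (Nat.factorial m : ℝ))) :=
    hq.mul_left c2
  have hg : ∀ m : ℕ,
      Real.sqrt ((m : ℝ) + 2) * (Real.log ((m : ℝ) + 2)) ^ ((3 : ℝ) / 2) * ρ ^ m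
        / (Nat.factorial m)
      ≤ c1 * (ρ^m / (Nat.factorial m : ℝ))
          + c2 * (((m:ℝ)+2)^3 * ρ^m / (Nat.factorial m : ℝ)) := by
    intro m
    have hF : (0:ℝ) < (Nat.factorial m : ℝ) := by exact_mod_cast (Nat.factorial_pos m)
    have hρm : (0:ℝ) ≤ ρ^m / (Nat.factorial m : ℝ) := by positivity
    have hpw := pointwise ρ hρ m
    have hmul := mul_le_mul_of_nonneg_right hpw hρm
    calc Real.sqrt ((m : ℝ) + 2) * (Real.log ((m : ℝ) + 2)) ^ ((3 : ℝ) / 2) * ρ ^ m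
          / (Nat.factorial m)
        = Real.sqrt ((m : ℝ) + 2) * (Real.log ((m : ℝ) + 2)) ^ ((3 : ℝ) / 2)
            * (ρ^m / (Nat.factorial m : ℝ)) := by ring
      _ ≤ 8 * (1 + ((m:ℝ)+2)^3/ρ^3) * (Real.sqrt ρ * L32)
            * (ρ^m / (Nat.factorial m : ℝ)) := hmul
      _ = c1 * (ρ^m / (Nat.factorial m : ℝ))
            + c2 * (((m:ℝ)+2)^3 * ρ^m / (Nat.factorial m : ℝ)) := by
          simp only [hc1def, hc2def]
          field_simp
  have hexp : Real.exp ρ = ∑' n : ℕ, ρ ^ n / (Nat.factorial n : ℝ) := by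
    rw [Real.exp_eq_exp_ℝ, NormedSpace.exp_eq_tsum_div]
  have htsum_le : (∑' m : ℕ,
      Real.sqrt ((m : ℝ) + 2) * (Real.log ((m : ℝ) + 2)) ^ ((3 : ℝ) / 2) * ρ ^ m
        / (Nat.factorial m))
      ≤ c1 * Real.exp ρ + c2 * (∑' m : ℕ, ((m:ℝ)+2)^3 * ρ^m / (Nat.factorial m : ℝ)) := by
    calc (∑' m : ℕ,
        Real.sqrt ((m : ℝ) + 2) * (Real.log ((m : ℝ) + 2)) ^ ((3 : ℝ) / 2) * ρ ^ m
          / (Nat.factorial m))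
        ≤ ∑' m : ℕ, (c1 * (ρ^m / (Nat.factorial m : ℝ))
            + c2 * (((m:ℝ)+2)^3 * ρ^m / (Nat.factorial m : ℝ))) :=
          Summable.tsum_le_tsum hg hsummable (hs1.add hs2)
      _ = (∑' m : ℕ, c1 * (ρ^m / (Nat.factorial m : ℝ)))
            + ∑' m : ℕ, c2 * (((m:ℝ)+2)^3 * ρ^m / (Nat.factorial m : ℝ)) :=
          Summable.tsum_add hs1 hs2
      _ = c1 * (∑' m : ℕ, ρ^m / (Nat.factorial m : ℝ))
            + c2 * ∑' m : ℕ, ((m:ℝ)+2)^3 * ρ^m / (Nat.factorial m : ℝ) := by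
          rw [tsum_mul_left, tsum_mul_left]
      _ = c1 * Real.exp ρ + c2 * ∑' m : ℕ, ((m:ℝ)+2)^3 * ρ^m / (Nat.factorial m : ℝ) := by
          rw [← hexp]
  have hqle := tsum_q_le ρ hρ
  have hfinal : c1 * Real.exp ρ + c2 * (∑' m : ℕ, ((m:ℝ)+2)^3 * ρ^m / (Nat.factorial m : ℝ))
      ≤ 1000 * Real.exp ρ * Real.sqrt ρ * L32 := by
    have h2 : c2 * (∑' m : ℕ, ((m:ℝ)+2)^3 * ρ^m / (Nat.factorial m : ℝ))
        ≤ c2 * (88 * ρ^3 * Real.exp ρ) := mul_le_mul_of_nonneg_left hqle hc20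
    have hc2eq : c2 * (88 * ρ^3 * Real.exp ρ) = 704 * (Real.sqrt ρ * L32) * Real.exp ρ := by
      simp only [hc2def]
      field_simp
      ring
    have hexp0 : 0 < Real.exp ρ := Real.exp_pos ρ
    have : c1 * Real.exp ρ + 704 * (Real.sqrt ρ * L32) * Real.exp ρ
        = 712 * (Real.sqrt ρ * L32) * Real.exp ρ := by
      simp only [hc1def]; ring
    nlinarith [mul_nonneg hS0 hexp0.le]
  exact htsum_le.trans hfinal
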